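/- Let w_1,…,w_d, v_1,…,v_d, and the dD entries of the vectors u_1,…,u_d ∈ ℝ^D all be independent random variables, each uniformly distributed on [−1, 1]. Then for any fixed x ∈ ℝ^D and any fixed j ∈ {1,…,d}, E[ (⟨u_j, x⟩ + v_j)²·Σ_{j'=1}^d w_{j'}²·(⟨u_{j'}, x⟩ + v_{j'})² ] = (1/3)·[ (1/3)·‖x‖₂⁴ − (2/15)·‖x‖₄⁴ + (2/3)·‖x‖₂² + 1/5 ] + ((d−1)/3)·((‖x‖₂² + 1)/3)². -/

import Mathlib

open MeasureTheory Real

/-- The uniform probability distribution on `[-1, 1]`. -/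
noncomputable def unif : Measure ℝ :=
  (2 : ENNReal)⁻¹ • (volume.restrict (Set.Icc (-1 : ℝ) 1))

lemma unif_Icc : unif (Set.Icc (-1:ℝ) 1) = 1 := by
  simp [unif, Measure.restrict_apply, Real.volume_Icc]
  rw [show ((1:ℝ) + 1) = 2 by norm_num, ENNReal.ofReal_ofNat]
  exact ENNReal.inv_mul_cancel (by norm_num) (by norm_num)

instance : IsProbabilityMeasure unif := by
  constructor
  have : unif Set.univ = unif (Set.Icc (-1:ℝ) 1) := by
    simp [unif, Measure.restrict_apply, Real.volume_Icc]
  rw [this, unif_Icc]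

lemma unif_compl : unif (Set.Icc (-1:ℝ) 1)ᶜ = 0 := by
  simp [unif, Measure.restrict_apply (measurableSet_Icc.compl)]

lemma unif_moment (k : ℕ) :
    ∫ t, t ^ k ∂unif = (1 - (-1:ℝ)^(k+1)) / (2 * (k+1)) := by
  rw [unif, integral_smul_measure, integral_Icc_eq_integral_Ioc,
    ← intervalIntegral.integral_of_le (by norm_num : (-1:ℝ) ≤ 1),
    integral_pow]
  simp [ENNReal.toReal_inv, pow_succ]
  have h : ((k:ℝ) + 1) ≠ 0 := by positivity
  field_simp

/-- continuous functions are integrable wrt measures with compact "support" -/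
lemma integrable_of_compact {α : Type*} [TopologicalSpace α] [MeasurableSpace α]
    [OpensMeasurableSpace α] {μ : Measure α} [IsFiniteMeasure μ] {K : Set α}
    (hK : IsCompact K) (h0 : μ Kᶜ = 0) {f : α → ℝ} (hf : Continuous f) :
    Integrable f μ := by
  obtain ⟨C, hC⟩ := hK.exists_bound_of_continuousOn hf.continuousOn
  refine ⟨hf.aestronglyMeasurable, HasFiniteIntegral.of_bounded (C := C) ?_⟩
  have : ∀ᵐ a ∂μ, a ∈ K := by
    rw [ae_iff]; simpa [Set.compl_def] using h0
  filter_upwards [this] with a ha using hC a ha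

lemma compl_null_of_one {α : Type*} [MeasurableSpace α] {μ : Measure α}
    [IsProbabilityMeasure μ] {K : Set α} (hm : MeasurableSet K) (h1 : μ K = 1) :
    μ Kᶜ = 0 := by
  rw [measure_compl hm (by simp)]; simp [h1]

lemma prod_compl_null {α β : Type*} [MeasurableSpace α] [MeasurableSpace β]
    {μ : Measure α} {ν : Measure β} [SFinite μ] [SFinite ν]
    {K1 : Set α} {K2 : Set β} (h1 : μ K1ᶜ = 0) (h2 : ν K2ᶜ = 0) :
    (μ.prod ν) (K1 ×ˢ K2)ᶜ = 0 := by
  have hsub : (K1 ×ˢ K2)ᶜ ⊆ (K1ᶜ ×ˢ Set.univ) ∪ (Set.univ ×ˢ K2ᶜ) := by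
    intro p hp
    simp only [Set.mem_compl_iff, Set.mem_prod] at hp
    simp only [Set.mem_union, Set.mem_prod, Set.mem_univ, Set.mem_compl_iff, and_true, true_and]
    tauto
  refine measure_mono_null hsub (measure_union_null ?_ ?_) <;>
    rw [Measure.prod_prod] <;> simp [h1, h2]

/-- the unit box in `Fin n → E` -/
def box {E : Type*} (n : ℕ) (K : Set E) : Set (Fin n → E) := Set.pi Set.univ fun _ => K

lemma pi_box_one {n : ℕ} {E : Type*} [MeasurableSpace E] (μ : Measure E)
    [IsProbabilityMeasure μ] {K : Set E} (h1 : μ K = 1) :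
    Measure.pi (fun _ : Fin n => μ) (box n K) = 1 := by
  rw [box, Measure.pi_pi]; simp [h1]

lemma pi_box_compl {n : ℕ} {E : Type*} [MeasurableSpace E] (μ : Measure E)
    [IsProbabilityMeasure μ] {K : Set E} (hm : MeasurableSet K) (h1 : μ K = 1) :
    Measure.pi (fun _ : Fin n => μ) (box n K)ᶜ = 0 :=
  compl_null_of_one (MeasurableSet.univ_pi fun _ => hm) (pi_box_one μ h1)

lemma box_compact {E : Type*} [TopologicalSpace E] {n : ℕ} {K : Set E} (hK : IsCompact K) :
    IsCompact (box n K) := isCompact_univ_pi fun _ => hK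

-- concrete integrability lemmas
lemma integrable_unif {f : ℝ → ℝ} (hf : Continuous f) : Integrable f unif :=
  integrable_of_compact isCompact_Icc unif_compl hf

lemma nu_box_compl (n : ℕ) :
    Measure.pi (fun _ : Fin n => unif) (box n (Set.Icc (-1:ℝ) 1))ᶜ = 0 :=
  pi_box_compl unif measurableSet_Icc unif_Icc

lemma integrable_nu {n : ℕ} {f : (Fin n → ℝ) → ℝ} (hf : Continuous f) :
    Integrable f (Measure.pi fun _ : Fin n => unif) :=
  integrable_of_compact (box_compact isCompact_Icc) (nu_box_compl n) hf

lemma integrable_prod_unif_nu {n : ℕ} {f : ℝ × (Fin n → ℝ) → ℝ} (hf : Continuous f) :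
    Integrable f (unif.prod (Measure.pi fun _ : Fin n => unif)) :=
  integrable_of_compact (isCompact_Icc.prod (box_compact isCompact_Icc))
    (prod_compl_null unif_compl (nu_box_compl n)) hf

lemma contS {n : ℕ} (z : Fin n → ℝ) : Continuous (fun y : Fin n → ℝ => ∑ i, y i * z i) :=
  continuous_finset_sum _ fun i _ => (continuous_apply i).mul continuous_const


lemma prod_term {n : ℕ} (x0 : ℝ) (z : Fin n → ℝ) (m l : ℕ) :
    ∫ p : ℝ × (Fin n → ℝ), (p.1 * x0)^m * (∑ i, p.2 i * z i)^l
      ∂(unif.prod (Measure.pi fun _ : Fin n => unif))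
    = (x0^m * ∫ t, t^m ∂unif) *
      ∫ y, (∑ i, y i * z i)^l ∂(Measure.pi fun _ : Fin n => unif) := by
  calc ∫ p : ℝ × (Fin n → ℝ), (p.1 * x0)^m * (∑ i, p.2 i * z i)^l
      ∂(unif.prod (Measure.pi fun _ : Fin n => unif))
      = (∫ t, (t * x0)^m ∂unif) *
        ∫ y : Fin n → ℝ, (∑ i, y i * z i)^l ∂(Measure.pi fun _ : Fin n => unif) :=
      integral_prod_mul (fun t => (t * x0)^m) (fun y : Fin n → ℝ => (∑ i, y i * z i)^l)
    _ = _ := by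
      congr 1
      simp_rw [mul_pow]
      rw [integral_mul_const]
      ring

lemma integrable_term {n : ℕ} (x0 : ℝ) (z : Fin n → ℝ) (c : ℝ) (m l : ℕ) :
    Integrable (fun p : ℝ × (Fin n → ℝ) => c * ((p.1 * x0)^m * (∑ i, p.2 i * z i)^l))
      (unif.prod (Measure.pi fun _ : Fin n => unif)) :=
  integrable_prod_unif_nu (continuous_const.mul
    (((continuous_fst.mul continuous_const).pow m).mul
      (((contS z).comp continuous_snd).pow l)))

lemma binom_int {n : ℕ} (x0 : ℝ) (z : Fin n → ℝ) (k : ℕ) :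
    ∫ p : ℝ × (Fin n → ℝ), (p.1 * x0 + ∑ i, p.2 i * z i)^k
      ∂(unif.prod (Measure.pi fun _ : Fin n => unif))
    = ∑ m ∈ Finset.range (k+1), (k.choose m : ℝ) *
        ((x0^m * ∫ t, t^m ∂unif) *
          ∫ y, (∑ i, y i * z i)^(k-m) ∂(Measure.pi fun _ : Fin n => unif)) := by
  have expand : ∀ p : ℝ × (Fin n → ℝ), (p.1 * x0 + ∑ i, p.2 i * z i)^k
      = ∑ m ∈ Finset.range (k+1), (k.choose m : ℝ) *
          ((p.1 * x0)^m * (∑ i, p.2 i * z i)^(k-m)) := by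
    intro p
    rw [add_pow]
    refine Finset.sum_congr rfl fun m _ => by ring
  simp_rw [expand]
  rw [integral_finset_sum _ (fun m _ => integrable_term x0 z _ m (k-m))]
  refine Finset.sum_congr rfl fun m _ => ?_
  rw [integral_const_mul, prod_term]

lemma Iu_all (n : ℕ) (x : Fin n → ℝ) :
    (∫ u, (∑ i, u i * x i)^2 ∂(Measure.pi fun _ : Fin n => unif)) = (∑ i, x i^2)/3 ∧
    (∫ u, (∑ i, u i * x i)^4 ∂(Measure.pi fun _ : Fin n => unif))
      = (∑ i, x i^4)/5 + ((∑ i, x i^2)^2 - ∑ i, x i^4)/3 := by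
  induction n with
  | zero => simp
  | succ n ih =>
    obtain ⟨ih2, ih4⟩ := ih (fun i => x (Fin.succ i))
    have hmp := (measurePreserving_piFinSuccAbove (fun _ : Fin (n+1) => unif) 0).symm
    have key : ∀ k : ℕ, (∫ u, (∑ i, u i * x i)^k ∂(Measure.pi fun _ : Fin (n+1) => unif))
        = ∫ p : ℝ × (Fin n → ℝ), (p.1 * x 0 + ∑ i, p.2 i * x (Fin.succ i))^k
          ∂(unif.prod (Measure.pi fun _ : Fin n => unif)) := by
      intro k
      rw [← hmp.integral_comp']
      congr 1
      funext p
      simp [MeasurableEquiv.piFinSuccAbove_symm_apply, Fin.insertNthEquiv,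
        Equiv.coe_fn_mk, Fin.insertNth_zero, Fin.sum_univ_succ, Fin.cons_zero,
        Fin.cons_succ, Fin.zero_succAbove, cast_eq]
    constructor
    · rw [key 2, binom_int]
      norm_num [Finset.sum_range_succ, unif_moment, ih2, Fin.sum_univ_succ]
      ring
    · rw [key 4, binom_int]
      norm_num [Finset.sum_range_succ, unif_moment, ih2, ih4, Fin.sum_univ_succ,
        Nat.choose]
      ring

/-- Port of `integral_fin_nat_prod_eq_prod` for general measures. -/
lemma integral_pi_prod {n : ℕ} {E : Fin n → Type*}
    [∀ i, MeasurableSpace (E i)] (μ : ∀ i, Measure (E i)) [∀ i, SigmaFinite (μ i)]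
    (f : (i : Fin n) → E i → ℝ) :
    ∫ x, ∏ i, f i (x i) ∂Measure.pi μ = ∏ i, ∫ x, f i x ∂μ i := by
  induction n with
  | zero =>
      simp [measureReal_def, Measure.pi_empty_univ]
  | succ n n_ih =>
      calc
        _ = ∫ x : E 0 × ((i : Fin n) → E (Fin.succ i)),
            f 0 x.1 * ∏ i : Fin n, f (Fin.succ i) (x.2 i)
            ∂((μ 0).prod (Measure.pi fun i => μ (Fin.succ i))) := by
          rw [← ((measurePreserving_piFinSuccAbove μ 0).symm).integral_comp']
          simp_rw [MeasurableEquiv.piFinSuccAbove_symm_apply, Fin.insertNthEquiv,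
            Fin.prod_univ_succ, Fin.insertNth_zero, Equiv.coe_fn_mk, Fin.cons_succ,
            Fin.cons_zero]
          rfl
        _ = (∫ x, f 0 x ∂μ 0) * ∏ i : Fin n, ∫ x, f (Fin.succ i) x ∂μ (Fin.succ i) := by
          rw [← n_ih, ← integral_prod_mul]
        _ = ∏ i, ∫ x, f i x ∂μ i := by rw [Fin.prod_univ_succ]

/-- integral of a function of a single coordinate -/
lemma integral_pi_eval {n : ℕ} {E : Type*}
    [MeasurableSpace E] (μ : Measure E) [IsProbabilityMeasure μ]
    (k : Fin n) (f : E → ℝ) :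
    ∫ x : Fin n → E, f (x k) ∂Measure.pi (fun _ => μ) = ∫ y, f y ∂μ := by
  classical
  set F : Fin n → E → ℝ := fun i t => if i = k then f t else 1 with hF
  have h1 : (fun x : Fin n → E => f (x k)) = fun x => ∏ i, F i (x i) := by
    funext x
    rw [Finset.prod_eq_single k (fun b _ hb => by simp [hF, hb]) (by simp)]
    simp [hF]
  rw [h1, integral_pi_prod]
  rw [Finset.prod_eq_single k (fun b _ hb => by simp [hF, hb]) (by simp)]
  simp [hF]

/-- integral of a product of functions of two distinct coordinates -/
lemma integral_pi_eval_two {n : ℕ} {E : Type*}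
    [MeasurableSpace E] (μ : Measure E) [IsProbabilityMeasure μ]
    {k l : Fin n} (hkl : k ≠ l) (f : E → ℝ) (g : E → ℝ) :
    ∫ x : Fin n → E, f (x k) * g (x l) ∂Measure.pi (fun _ => μ)
      = (∫ y, f y ∂μ) * ∫ y, g y ∂μ := by
  classical
  set F : Fin n → E → ℝ := fun i t =>
    if i = k then f t else if i = l then g t else 1 with hF
  have h1 : (fun x : Fin n → E => f (x k) * g (x l)) = fun x => ∏ i, F i (x i) := by
    funext x
    rw [← Finset.prod_erase_mul _ _ (Finset.mem_univ l),
        ← Finset.prod_erase_mul _ _ (Finset.mem_erase.2 ⟨hkl, Finset.mem_univ k⟩)]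
    rw [Finset.prod_eq_one (fun b hb => by
      simp only [Finset.mem_erase] at hb
      simp [hF, hb.1, hb.2.1])]
    have hlk : l ≠ k := hkl.symm
    simp [hF, hlk]
  rw [h1, integral_pi_prod]
  rw [← Finset.prod_erase_mul _ _ (Finset.mem_univ l),
      ← Finset.prod_erase_mul _ _ (Finset.mem_erase.2 ⟨hkl, Finset.mem_univ k⟩)]
  rw [Finset.prod_eq_one (fun b hb => by
    simp only [Finset.mem_erase] at hb
    simp [hF, hb.1, hb.2.1])]
  have hlk : l ≠ k := hkl.symm
  simp [hF, hlk]

section Qlevel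

variable {d D : ℕ} (x : Fin D → ℝ)

/-- abbreviation for the measure on the (v, u) space -/
noncomputable def Qm (d D : ℕ) : Measure ((Fin d → ℝ) × (Fin d → Fin D → ℝ)) :=
  (Measure.pi fun _ : Fin d => unif).prod
    (Measure.pi fun _ : Fin d => Measure.pi fun _ : Fin D => unif)

instance (d D : ℕ) : IsProbabilityMeasure (Qm d D) := by
  unfold Qm; infer_instance

lemma nu2_box_compl (d D : ℕ) :
    (Measure.pi fun _ : Fin d => (Measure.pi fun _ : Fin D => unif))
      (box d (box D (Set.Icc (-1:ℝ) 1)))ᶜ = 0 :=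
  pi_box_compl _ (MeasurableSet.univ_pi fun _ => measurableSet_Icc)
    (pi_box_one _ unif_Icc)

lemma integrable_Q {f : (Fin d → ℝ) × (Fin d → Fin D → ℝ) → ℝ} (hf : Continuous f) :
    Integrable f (Qm d D) :=
  integrable_of_compact ((box_compact isCompact_Icc).prod
      (box_compact (box_compact isCompact_Icc)))
    (prod_compl_null (nu_box_compl d) (nu2_box_compl d D)) hf

lemma contSj (j : Fin d) : Continuous (fun u : Fin d → Fin D → ℝ => ∑ i, u j i * x i) := by
  exact (contS x).comp (continuous_apply j : Continuous fun u : Fin d → Fin D → ℝ => u j)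

/-- the generic two-coordinate moment over `Qm`, `j ≠ j'`. -/
lemma term_Q {j j' : Fin d} (hjj' : j ≠ j') (a b c e : ℕ) :
    ∫ q : (Fin d → ℝ) × (Fin d → Fin D → ℝ),
        (q.1 j ^ a * q.1 j' ^ b) *
          ((∑ i, q.2 j i * x i)^c * (∑ i, q.2 j' i * x i)^e) ∂(Qm d D)
      = ((∫ t, t^a ∂unif) * (∫ t, t^b ∂unif)) *
        ((∫ y : Fin D → ℝ, (∑ i, y i * x i)^c ∂(Measure.pi fun _ : Fin D => unif)) *
         (∫ y : Fin D → ℝ, (∑ i, y i * x i)^e ∂(Measure.pi fun _ : Fin D => unif))) := by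
  calc ∫ q : (Fin d → ℝ) × (Fin d → Fin D → ℝ),
        (q.1 j ^ a * q.1 j' ^ b) *
          ((∑ i, q.2 j i * x i)^c * (∑ i, q.2 j' i * x i)^e) ∂(Qm d D)
      = (∫ v : Fin d → ℝ, v j ^ a * v j' ^ b ∂(Measure.pi fun _ : Fin d => unif)) *
        ∫ u : Fin d → Fin D → ℝ, (∑ i, u j i * x i)^c * (∑ i, u j' i * x i)^e
          ∂(Measure.pi fun _ : Fin d => Measure.pi fun _ : Fin D => unif) :=
      integral_prod_mul (fun v : Fin d → ℝ => v j ^ a * v j' ^ b)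
        (fun u : Fin d → Fin D → ℝ => (∑ i, u j i * x i)^c * (∑ i, u j' i * x i)^e)
    _ = _ := by
      rw [integral_pi_eval_two (E := ℝ) unif hjj' (fun t => t^a) (fun t => t^b),
        integral_pi_eval_two (E := Fin D → ℝ) (Measure.pi fun _ : Fin D => unif) hjj'
          (fun y => (∑ i, y i * x i)^c) (fun y => (∑ i, y i * x i)^e)]

/-- the generic one-coordinate moment over `Qm`. -/
lemma term_Q_one (j : Fin d) (a c : ℕ) :
    ∫ q : (Fin d → ℝ) × (Fin d → Fin D → ℝ),
        q.1 j ^ a * (∑ i, q.2 j i * x i)^c ∂(Qm d D)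
      = (∫ t, t^a ∂unif) *
        ∫ y : Fin D → ℝ, (∑ i, y i * x i)^c ∂(Measure.pi fun _ : Fin D => unif) := by
  calc ∫ q : (Fin d → ℝ) × (Fin d → Fin D → ℝ),
        q.1 j ^ a * (∑ i, q.2 j i * x i)^c ∂(Qm d D)
      = (∫ v : Fin d → ℝ, v j ^ a ∂(Measure.pi fun _ : Fin d => unif)) *
        ∫ u : Fin d → Fin D → ℝ, (∑ i, u j i * x i)^c
          ∂(Measure.pi fun _ : Fin d => Measure.pi fun _ : Fin D => unif) :=
      integral_prod_mul (fun v : Fin d → ℝ => v j ^ a)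
        (fun u : Fin d → Fin D → ℝ => (∑ i, u j i * x i)^c)
    _ = _ := by
      rw [integral_pi_eval (E := ℝ) unif j (fun t => t^a),
        integral_pi_eval (E := Fin D → ℝ) (Measure.pi fun _ : Fin D => unif) j
          (fun y => (∑ i, y i * x i)^c)]

end Qlevel

section main

variable {d D : ℕ}

lemma EA2 (x : Fin D → ℝ) (j : Fin d) :
    ∫ q : (Fin d → ℝ) × (Fin d → Fin D → ℝ),
        ((∑ i, q.2 j i * x i) + q.1 j)^2 * ((∑ i, q.2 j i * x i) + q.1 j)^2 ∂(Qm d D)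
      = (1/3) * (∑ i, x i^2)^2 - (2/15) * (∑ i, x i^4)
        + (2/3) * (∑ i, x i^2) + 1/5 := by
  obtain ⟨Iu2, Iu4⟩ := Iu_all D x
  have expand : (fun q : (Fin d → ℝ) × (Fin d → Fin D → ℝ) =>
      ((∑ i, q.2 j i * x i) + q.1 j)^2 * ((∑ i, q.2 j i * x i) + q.1 j)^2)
      = fun q => ∑ m ∈ Finset.range 5, (Nat.choose 4 m : ℝ) *
          (q.1 j ^ m * (∑ i, q.2 j i * x i)^(4-m)) := by
    funext q
    rw [show ((∑ i, q.2 j i * x i) + q.1 j)^2 * ((∑ i, q.2 j i * x i) + q.1 j)^2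
        = (q.1 j + (∑ i, q.2 j i * x i))^4 by ring, add_pow]
    exact Finset.sum_congr rfl fun m _ => by ring
  have hc1 : Continuous fun q : (Fin d → ℝ) × (Fin d → Fin D → ℝ) => q.1 j :=
    (continuous_apply j).comp continuous_fst
  have hc2 : Continuous fun q : (Fin d → ℝ) × (Fin d → Fin D → ℝ) =>
      ∑ i, q.2 j i * x i := (contSj x j).comp continuous_snd
  rw [expand, integral_finset_sum _ (fun m _ => integrable_Q
    (f := fun q => (Nat.choose 4 m : ℝ) * (q.1 j ^ m * (∑ i, q.2 j i * x i)^(4-m)))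
    (continuous_const.mul ((hc1.pow m).mul (hc2.pow (4-m)))))]
  simp_rw [integral_const_mul, term_Q_one]
  norm_num [Finset.sum_range_succ, unif_moment, Iu2, Iu4, Nat.choose]
  ring

lemma EAA (x : Fin D → ℝ) {j j' : Fin d} (hjj' : j ≠ j') :
    ∫ q : (Fin d → ℝ) × (Fin d → Fin D → ℝ),
        ((∑ i, q.2 j i * x i) + q.1 j)^2 * ((∑ i, q.2 j' i * x i) + q.1 j')^2 ∂(Qm d D)
      = (((∑ i, x i^2) + 1)/3)^2 := by
  obtain ⟨Iu2, Iu4⟩ := Iu_all D x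
  have expand : (fun q : (Fin d → ℝ) × (Fin d → Fin D → ℝ) =>
      ((∑ i, q.2 j i * x i) + q.1 j)^2 * ((∑ i, q.2 j' i * x i) + q.1 j')^2)
      = fun q => ∑ ab ∈ Finset.range 3 ×ˢ Finset.range 3,
          ((Nat.choose 2 ab.1 : ℝ) * (Nat.choose 2 ab.2 : ℝ)) *
          ((q.1 j ^ ab.1 * q.1 j' ^ ab.2) *
            ((∑ i, q.2 j i * x i)^(2-ab.1) * (∑ i, q.2 j' i * x i)^(2-ab.2))) := by
    funext q
    rw [Finset.sum_product]
    rw [show ((∑ i, q.2 j i * x i) + q.1 j)^2 * ((∑ i, q.2 j' i * x i) + q.1 j')^2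
        = (q.1 j + (∑ i, q.2 j i * x i))^2 * ((q.1 j' + (∑ i, q.2 j' i * x i))^2) by ring,
      add_pow, add_pow, Finset.sum_mul_sum]
    exact Finset.sum_congr rfl fun a _ => Finset.sum_congr rfl fun b _ => by ring
  have hc1 : ∀ k : Fin d, Continuous fun q : (Fin d → ℝ) × (Fin d → Fin D → ℝ) => q.1 k :=
    fun k => (continuous_apply k).comp continuous_fst
  have hc2 : ∀ k : Fin d, Continuous fun q : (Fin d → ℝ) × (Fin d → Fin D → ℝ) =>
      ∑ i, q.2 k i * x i := fun k => (contSj x k).comp continuous_snd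
  rw [expand, integral_finset_sum _ (fun ab _ => integrable_Q
    (f := fun q => ((Nat.choose 2 ab.1 : ℝ) * (Nat.choose 2 ab.2 : ℝ)) *
            ((q.1 j ^ ab.1 * q.1 j' ^ ab.2) *
              ((∑ i, q.2 j i * x i)^(2-ab.1) * (∑ i, q.2 j' i * x i)^(2-ab.2))))
    (continuous_const.mul ((((hc1 j).pow ab.1).mul ((hc1 j').pow ab.2)).mul
      (((hc2 j).pow (2-ab.1)).mul ((hc2 j').pow (2-ab.2))))))]
  simp_rw [integral_const_mul, term_Q x hjj']
  rw [Finset.sum_product]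
  norm_num [Finset.sum_range_succ, unif_moment, Iu2, Nat.choose]
  ring

end main

lemma integrable_M {d D : ℕ}
    {f : (Fin d → ℝ) × ((Fin d → ℝ) × (Fin d → Fin D → ℝ)) → ℝ} (hf : Continuous f) :
    Integrable f ((Measure.pi fun _ : Fin d => unif).prod (Qm d D)) :=
  integrable_of_compact ((box_compact isCompact_Icc).prod
      ((box_compact isCompact_Icc).prod (box_compact (box_compact isCompact_Icc))))
    (prod_compl_null (nu_box_compl d)
      (prod_compl_null (nu_box_compl d) (nu2_box_compl d D))) hf

/-- if `w_1,…,w_d`, `v_1,…,v_d` and the `dD` entries of `u_1,…,u_d ∈ ℝ^D`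
are all independent, each uniform on `[-1,1]`, then for fixed `x ∈ ℝ^D` and `j`,
`E[(⟨u_j,x⟩ + v_j)²·Σ_{j'} w_{j'}²·(⟨u_{j'},x⟩ + v_{j'})²]
 = (1/3)·[(1/3)‖x‖₂⁴ − (2/15)‖x‖₄⁴ + (2/3)‖x‖₂² + 1/5] + ((d−1)/3)·((‖x‖₂² + 1)/3)²`. -/
theorem stmt_7 (D d : ℕ) (hD : 1 ≤ D) (hd : 1 ≤ d) (x : Fin D → ℝ) (j : Fin d) :
    ∫ p : (Fin d → ℝ) × (Fin d → ℝ) × (Fin d → Fin D → ℝ),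
        ((∑ i, p.2.2 j i * x i) + p.2.1 j) ^ 2 *
          ∑ j', (p.1 j') ^ 2 * ((∑ i, p.2.2 j' i * x i) + p.2.1 j') ^ 2
        ∂((Measure.pi fun _ : Fin d => unif).prod
          ((Measure.pi fun _ : Fin d => unif).prod
            (Measure.pi fun _ : Fin d => Measure.pi fun _ : Fin D => unif))) =
      (1 / 3) * ((1 / 3) * (∑ i, x i ^ 2) ^ 2 - (2 / 15) * (∑ i, x i ^ 4) +
          (2 / 3) * (∑ i, x i ^ 2) + 1 / 5) +
        (((d : ℝ) - 1) / 3) * (((∑ i, x i ^ 2) + 1) / 3) ^ 2 := by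
  classical
  set s2 : ℝ := ∑ i, x i ^ 2 with hs2
  set s4 : ℝ := ∑ i, x i ^ 4 with hs4
  set B : ℝ := (1/3) * s2^2 - (2/15) * s4 + (2/3) * s2 + 1/5 with hB
  set P2 : ℝ := ((s2 + 1)/3)^2 with hP2
  show ∫ p : (Fin d → ℝ) × ((Fin d → ℝ) × (Fin d → Fin D → ℝ)),
        ((∑ i, p.2.2 j i * x i) + p.2.1 j) ^ 2 *
          ∑ j', (p.1 j') ^ 2 * ((∑ i, p.2.2 j' i * x i) + p.2.1 j') ^ 2
        ∂((Measure.pi fun _ : Fin d => unif).prod (Qm d D))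
      = (1 / 3) * B + (((d : ℝ) - 1) / 3) * P2
  have hsplit : (fun p : (Fin d → ℝ) × ((Fin d → ℝ) × (Fin d → Fin D → ℝ)) =>
      ((∑ i, p.2.2 j i * x i) + p.2.1 j) ^ 2 *
        ∑ j', (p.1 j') ^ 2 * ((∑ i, p.2.2 j' i * x i) + p.2.1 j') ^ 2)
      = fun p => ∑ j', (p.1 j')^2 *
          ((((∑ i, p.2.2 j i * x i) + p.2.1 j) ^ 2) *
            (((∑ i, p.2.2 j' i * x i) + p.2.1 j') ^ 2)) := by
    funext p
    rw [Finset.mul_sum]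
    exact Finset.sum_congr rfl fun _ _ => by ring
  have hc1 : ∀ k : Fin d, Continuous fun p :
      (Fin d → ℝ) × ((Fin d → ℝ) × (Fin d → Fin D → ℝ)) => p.1 k :=
    fun k => (continuous_apply k).comp continuous_fst
  have hcA : ∀ k : Fin d, Continuous fun p :
      (Fin d → ℝ) × ((Fin d → ℝ) × (Fin d → Fin D → ℝ)) =>
        ((∑ i, p.2.2 k i * x i) + p.2.1 k) ^ 2 := by
    intro k
    exact ((((contSj x k).comp (continuous_snd.comp continuous_snd)).add
      ((continuous_apply k).comp (continuous_fst.comp continuous_snd))).pow 2)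
  rw [hsplit, integral_finset_sum _ (fun j' _ => integrable_M
    (f := fun p => (p.1 j')^2 *
            ((((∑ i, p.2.2 j i * x i) + p.2.1 j) ^ 2) *
              (((∑ i, p.2.2 j' i * x i) + p.2.1 j') ^ 2)))
    (((hc1 j').pow 2).mul ((hcA j).mul (hcA j'))))]
  have hterm : ∀ j' : Fin d,
      (∫ p : (Fin d → ℝ) × ((Fin d → ℝ) × (Fin d → Fin D → ℝ)),
        (p.1 j')^2 * ((((∑ i, p.2.2 j i * x i) + p.2.1 j) ^ 2) *
          (((∑ i, p.2.2 j' i * x i) + p.2.1 j') ^ 2))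
        ∂((Measure.pi fun _ : Fin d => unif).prod (Qm d D)))
      = (1/3) * (if j' = j then B else P2) := by
    intro j'
    calc (∫ p : (Fin d → ℝ) × ((Fin d → ℝ) × (Fin d → Fin D → ℝ)),
        (p.1 j')^2 * ((((∑ i, p.2.2 j i * x i) + p.2.1 j) ^ 2) *
          (((∑ i, p.2.2 j' i * x i) + p.2.1 j') ^ 2))
        ∂((Measure.pi fun _ : Fin d => unif).prod (Qm d D)))
        = (∫ w : Fin d → ℝ, (w j')^2 ∂(Measure.pi fun _ : Fin d => unif)) *
          ∫ q : (Fin d → ℝ) × (Fin d → Fin D → ℝ),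
            (((∑ i, q.2 j i * x i) + q.1 j) ^ 2) *
              (((∑ i, q.2 j' i * x i) + q.1 j') ^ 2) ∂(Qm d D) :=
        integral_prod_mul (fun w : Fin d → ℝ => (w j')^2)
          (fun q : (Fin d → ℝ) × (Fin d → Fin D → ℝ) =>
            (((∑ i, q.2 j i * x i) + q.1 j) ^ 2) *
              (((∑ i, q.2 j' i * x i) + q.1 j') ^ 2))
      _ = (1/3) * (if j' = j then B else P2) := by
        rw [integral_pi_eval (E := ℝ) unif j' (fun t => t^2), unif_moment]
        norm_num
        by_cases h : j' = j
        · subst h; rw [if_pos rfl, EA2 x j']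
        · rw [if_neg h, EAA x (fun he => h he.symm)]
  rw [Finset.sum_congr rfl fun j' _ => hterm j']
  have hite : ∀ j' : Fin d, (1/3 : ℝ) * (if j' = j then B else P2)
      = (1/3) * P2 + (if j' = j then (1/3) * B - (1/3) * P2 else 0) := by
    intro j'
    by_cases h : j' = j <;> simp [h] <;> ring
  rw [Finset.sum_congr rfl fun j' _ => hite j', Finset.sum_add_distrib,
    Finset.sum_const, Finset.sum_ite_eq' Finset.univ j
      (fun _ => (1/3 : ℝ) * B - (1/3) * P2)]
  simp only [Finset.card_univ, Fintype.card_fin, Finset.mem_univ, if_pos,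
    nsmul_eq_mul]
  have hd1 : (1 : ℝ) ≤ (d : ℝ) := by exact_mod_cast hd
  ring
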